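/- Let V(z) be the formal power series over ℚ with V(0) = 0 satisfying the functional equation V(z) = z·V(z)·S(V(z)), equivalently V(z) = z·∑_{s∈S} V(z)^{s+1}, for a Łukasiewicz step set S. Then [z^n] (V(z)/z) equals the number of Łukasiewicz excursions of length n with step set S. -/

import Mathlib

open PowerSeries Finset

/-- Finset of all lists of length `n` with entries in `S`. -/
def Luk.lists (S : Finset ℤ) : ℕ → Finset (List ℤ)
  | 0 => {[]}
  | n+1 => (S ×ˢ Luk.lists S n).image fun p => p.1 :: p.2

lemma Luk.mem_lists (S : Finset ℤ) : ∀ (n : ℕ) (l : List ℤ),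
    l ∈ Luk.lists S n ↔ l.length = n ∧ ∀ s ∈ l, s ∈ S := by
  intro n
  induction n with
  | zero => intro l; simp [Luk.lists, List.length_eq_zero_iff]; rintro rfl; simp
  | succ n ih =>
    intro l
    simp only [Luk.lists, Finset.mem_image, Finset.mem_product]
    constructor
    · rintro ⟨⟨a, t⟩, ⟨ha, ht⟩, rfl⟩
      obtain ⟨hlen, hmem⟩ := (ih t).1 ht
      refine ⟨by simp [hlen], ?_⟩
      intro s hs
      rcases List.mem_cons.1 hs with rfl | hs
      · exact ha
      · exact hmem s hs
    · rintro ⟨hlen, hmem⟩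
      cases l with
      | nil => simp at hlen
      | cons a t =>
        refine ⟨(a, t), ⟨hmem a (by simp), (ih t).2 ⟨by simpa using hlen, fun s hs => hmem s (by simp [hs])⟩⟩, rfl⟩

open Classical in
/-- Finset of nonnegative paths of length `n` from height `h` to `0`, steps in `S`. -/
noncomputable def Luk.MF (S : Finset ℤ) (h : ℕ) (n : ℕ) : Finset (List ℤ) :=
  (Luk.lists S n).filter
    (fun l => (∀ k : ℕ, 0 ≤ (h : ℤ) + (l.take k).sum) ∧ (h : ℤ) + l.sum = 0)

lemma Luk.mem_MF (S : Finset ℤ) (h n : ℕ) (l : List ℤ) :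
    l ∈ Luk.MF S h n ↔ l.length = n ∧ (∀ s ∈ l, s ∈ S) ∧
      (∀ k : ℕ, 0 ≤ (h : ℤ) + (l.take k).sum) ∧ (h : ℤ) + l.sum = 0 := by
  simp [Luk.MF, Luk.mem_lists, and_assoc]

lemma Luk.MF_zero_zero (S : Finset ℤ) : Luk.MF S 0 0 = {[]} := by
  ext l
  simp only [Luk.mem_MF, Finset.mem_singleton, List.length_eq_zero_iff]
  constructor
  · rintro ⟨rfl, _⟩; rfl
  · rintro rfl; simp

lemma Luk.MF_succ_zero (S : Finset ℤ) (h : ℕ) : Luk.MF S (h+1) 0 = ∅ := by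
  ext l
  simp only [Luk.mem_MF, Finset.notMem_empty, iff_false, List.length_eq_zero_iff]
  rintro ⟨rfl, -, -, hsum⟩
  simp at hsum
  omega

lemma Luk.sum_take_append (l1 l2 : List ℤ) (k : ℕ) :
    ((l1 ++ l2).take k).sum = (l1.take k).sum + (l2.take (k - l1.length)).sum := by
  rw [List.take_append, List.sum_append]

/-- composing: an excursion, a `-1` step, and a path from `h` give a path from `h+1`. -/
lemma Luk.compose_mem (S : Finset ℤ) (hneg : (-1 : ℤ) ∈ S) {h a b : ℕ}
    {e r : List ℤ} (he : e ∈ Luk.MF S 0 a) (hr : r ∈ Luk.MF S h b) :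
    e ++ -1 :: r ∈ Luk.MF S (h+1) (a + 1 + b) := by
  obtain ⟨hel, hes, hep, he0⟩ := (Luk.mem_MF S 0 a e).1 he
  obtain ⟨hrl, hrs, hrp, hr0⟩ := (Luk.mem_MF S h b r).1 hr
  simp only [Nat.cast_zero, zero_add] at hep he0
  rw [Luk.mem_MF]
  refine ⟨by simp [hel, hrl]; omega, ?_, ?_, ?_⟩
  · intro s hs
    rcases List.mem_append.1 hs with hs | hs
    · exact hes s hs
    · rcases List.mem_cons.1 hs with rfl | hs
      · exact hneg
      · exact hrs s hs
  · intro k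
    rw [Luk.sum_take_append]
    rcases Nat.lt_or_ge k (e.length + 1) with hk | hk
    · have : k - e.length = 0 ∨ k - e.length = 1 := by omega
      rcases this with h0 | h1
      · rw [h0]; simp only [List.take_zero, List.sum_nil, add_zero]
        have := hep k; push_cast; omega
      · rw [h1]
        have hke : k = e.length + 1 := by omega
        have : e.take k = e := List.take_of_length_le (by omega)
        rw [this, he0]
        simp
    · have h1 : e.take k = e := List.take_of_length_le (by omega)
      have h2 : (-1 :: r).take (k - e.length) = -1 :: r.take (k - e.length - 1) := by
        have : k - e.length = (k - e.length - 1) + 1 := by omega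
        rw [this]; rfl
      rw [h1, h2, he0]
      simp only [List.sum_cons, zero_add]
      have := hrp (k - e.length - 1)
      push_cast
      omega
  · rw [List.sum_append, List.sum_cons, he0]
    push_cast
    omega

/-- decomposition uniqueness: length of the excursion prefix is determined. -/
lemma Luk.decomp_len_unique {e e' r r' : List ℤ}
    (hep : ∀ k : ℕ, 0 ≤ (e.take k).sum) (he0 : e.sum = 0)
    (hep' : ∀ k : ℕ, 0 ≤ (e'.take k).sum) (he0' : e'.sum = 0)
    (heq : e ++ -1 :: r = e' ++ -1 :: r') : e.length = e'.length := by
  have key : ∀ (f f' q q' : List ℤ), (∀ k : ℕ, 0 ≤ (f.take k).sum) → f.sum = 0 →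
      (∀ k : ℕ, 0 ≤ (f'.take k).sum) → f'.sum = 0 →
      f ++ -1 :: q = f' ++ -1 :: q' → ¬ (f.length < f'.length) := by
    intro f f' q q' hfp hf0 hfp' hf0' h hlt
    have h1 : ((f ++ -1 :: q).take (f.length + 1)).sum = -1 := by
      rw [Luk.sum_take_append, List.take_of_length_le (by omega), hf0]
      simp
    have h2 : ((f' ++ -1 :: q').take (f.length + 1)).sum = (f'.take (f.length + 1)).sum := by
      rw [Luk.sum_take_append]
      have : f.length + 1 - f'.length = 0 := by omega
      rw [this]; simp
    rw [h, h2] at h1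
    have := hfp' (f.length + 1)
    omega
  rcases lt_trichotomy e.length e'.length with h | h | h
  · exact absurd h (key e e' r r' hep he0 hep' he0' heq)
  · exact h
  · exact absurd h (key e' e r' r hep' he0' hep he0 heq.symm)

/-- first passage decomposition (existence). -/
lemma Luk.decompose (S : Finset ℤ) (hnn : ∀ s ∈ S, s ≠ -1 → 0 ≤ s) {h n : ℕ}
    {l : List ℤ} (hl : l ∈ Luk.MF S (h+1) (n+1)) :
    ∃ a b : ℕ, a + b = n ∧ ∃ e ∈ Luk.MF S 0 a, ∃ r ∈ Luk.MF S h b, l = e ++ -1 :: r := by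
  obtain ⟨hll, hls, hlp, hl0⟩ := (Luk.mem_MF S (h+1) (n+1) l).1 hl
  have hex : ∃ k : ℕ, (l.take k).sum ≤ -1 := by
    refine ⟨n+1, ?_⟩
    rw [List.take_of_length_le (by omega)]
    push_cast at hl0
    omega
  classical
  obtain ⟨j, hj, hmin⟩ : ∃ j, (l.take j).sum ≤ -1 ∧ ∀ m < j, 0 ≤ (l.take m).sum :=
    ⟨Nat.find hex, Nat.find_spec hex, fun m hm => by have := Nat.find_min hex hm; omega⟩
  have hjle : j ≤ n + 1 := by
    by_contra hcon
    have := hmin (n+1) (by omega)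
    rw [List.take_of_length_le (by omega)] at this
    push_cast at hl0
    omega
  have hjpos : 1 ≤ j := by
    rcases Nat.eq_zero_or_pos j with h0 | h0
    · rw [h0] at hj; simp at hj
    · exact h0
  obtain ⟨a, rfl⟩ : ∃ a, j = a + 1 := ⟨j - 1, by omega⟩
  have hal : a < l.length := by omega
  have hstep : (l.take (a+1)).sum = (l.take a).sum + l[a] := List.sum_take_succ l a hal
  have hpa : 0 ≤ (l.take a).sum := hmin a (by omega)
  have hga : l[a] = -1 := by
    by_contra hne
    have := hnn l[a] (hls _ (List.getElem_mem hal)) hne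
    omega
  have hpa0 : (l.take a).sum = 0 := by omega
  have hpj : (l.take (a+1)).sum = -1 := by omega
  refine ⟨a, n - a, by omega, l.take a, ?_, l.drop (a+1), ?_, ?_⟩
  · rw [Luk.mem_MF]
    refine ⟨by simp [List.length_take]; omega, ?_, ?_, by simpa using hpa0⟩
    · intro s hs; exact hls s (List.mem_of_mem_take hs)
    · intro k
      rw [List.take_take]
      rcases Nat.le_total k a with hk | hk
      · simp [Nat.min_eq_left hk]
        exact hmin k (by omega)
      · simp [Nat.min_eq_right hk]
        omega
  · rw [Luk.mem_MF]
    have hdropsum : ∀ k : ℕ, (l.take (a+1+k)).sum = -1 + ((l.drop (a+1)).take k).sum := by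
      intro k
      rw [List.take_add, List.sum_append, hpj]
    refine ⟨by simp; omega, ?_, ?_, ?_⟩
    · intro s hs; exact hls s (List.mem_of_mem_drop hs)
    · intro k
      have := hlp (a+1+k)
      rw [hdropsum k] at this
      push_cast at this ⊢
      omega
    · have : l.take (a+1+(n+1)) = l := List.take_of_length_le (by omega)
      have h2 := hdropsum (n+1)
      rw [this] at h2
      have : (l.drop (a+1)).take (n+1) = l.drop (a+1) := List.take_of_length_le (by simp; omega)
      rw [this] at h2
      push_cast at hl0 ⊢
      omega
  · conv_lhs => rw [← List.take_append_drop a l]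
    congr 1
    rw [List.drop_eq_getElem_cons hal, hga]

lemma Luk.MF_card_succ (S : Finset ℤ) (hneg : (-1 : ℤ) ∈ S)
    (hnn : ∀ s ∈ S, s ≠ -1 → 0 ≤ s) (h n : ℕ) :
    (Luk.MF S (h+1) (n+1)).card
      = ∑ p ∈ Finset.HasAntidiagonal.antidiagonal n, (Luk.MF S 0 p.1).card * (Luk.MF S h p.2).card := by
  classical
  have hset : Luk.MF S (h+1) (n+1) = (Finset.HasAntidiagonal.antidiagonal n).biUnion
      (fun p => ((Luk.MF S 0 p.1) ×ˢ (Luk.MF S h p.2)).image (fun q => q.1 ++ -1 :: q.2)) := by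
    ext l
    simp only [Finset.mem_biUnion, Finset.mem_image, Finset.mem_product, Finset.HasAntidiagonal.mem_antidiagonal,
      Prod.exists]
    constructor
    · intro hl
      obtain ⟨a, b, hab, e, he, r, hr, rfl⟩ := Luk.decompose S hnn hl
      exact ⟨a, b, hab, e, r, ⟨he, hr⟩, rfl⟩
    · rintro ⟨a, b, hab, e, r, ⟨he, hr⟩, rfl⟩
      have := Luk.compose_mem S hneg he hr
      have hab' : a + 1 + b = n + 1 := by omega
      rwa [hab'] at this
  rw [hset, Finset.card_biUnion]
  · apply Finset.sum_congr rfl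
    intro p hp
    rw [Finset.card_image_of_injOn, Finset.card_product]
    rintro ⟨e, r⟩ hq ⟨e', r'⟩ hq' heq
    simp only [Finset.mem_coe, Finset.mem_product] at hq hq'
    obtain ⟨he, hr⟩ := hq
    obtain ⟨he', hr'⟩ := hq'
    simp only at heq
    have hle : e.length = e'.length := by
      have h1 := (Luk.mem_MF S 0 p.1 e).1 he
      have h2 := (Luk.mem_MF S 0 p.1 e').1 he'
      omega
    obtain ⟨h1, h2⟩ := List.append_inj heq hle
    simp only [List.cons.injEq] at h2
    exact Prod.ext h1 h2.2
  · rintro ⟨a, b⟩ hab ⟨a', b'⟩ hab' hne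
    simp only [Finset.mem_coe, Finset.HasAntidiagonal.mem_antidiagonal] at hab hab'
    rw [Function.onFun, Finset.disjoint_left]
    rintro l hl hl'
    simp only [Finset.mem_image, Finset.mem_product, Prod.exists] at hl hl'
    obtain ⟨e, r, ⟨he, hr⟩, rfl⟩ := hl
    obtain ⟨e', r', ⟨he', hr'⟩, heq⟩ := hl'
    obtain ⟨hel, -, hep, he0⟩ := (Luk.mem_MF S 0 a e).1 he
    obtain ⟨hel', -, hep', he0'⟩ := (Luk.mem_MF S 0 a' e').1 he'
    simp only [Nat.cast_zero, zero_add] at hep he0 hep' he0'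
    have := Luk.decomp_len_unique hep' he0' hep he0 heq
    apply hne
    have : a = a' := by omega
    subst this
    have : b = b' := by omega
    subst this
    rfl

lemma Luk.MF_card_first_step (S : Finset ℤ)
    (hnn : ∀ s ∈ S, s ≠ -1 → 0 ≤ s) (n : ℕ) :
    (Luk.MF S 0 (n+1)).card
      = ∑ s ∈ S.erase (-1), (Luk.MF S s.toNat n).card := by
  classical
  have hset : Luk.MF S 0 (n+1) = (S.erase (-1)).biUnion
      (fun s => (Luk.MF S s.toNat n).image (fun l => s :: l)) := by
    ext l
    simp only [Finset.mem_biUnion, Finset.mem_image]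
    constructor
    · intro hl
      obtain ⟨hll, hls, hlp, hl0⟩ := (Luk.mem_MF S 0 (n+1) l).1 hl
      simp only [Nat.cast_zero, zero_add] at hlp hl0
      cases l with
      | nil => simp at hll
      | cons s r =>
        have hs : s ∈ S := hls s (by simp)
        have hs0 : 0 ≤ s := by
          have := hlp 1
          simp at this
          by_contra hcon
          have := hnn s hs (by omega)
          omega
        refine ⟨s, Finset.mem_erase.2 ⟨by omega, hs⟩, r, ?_, rfl⟩
        rw [Luk.mem_MF]
        have hcast : (s.toNat : ℤ) = s := Int.toNat_of_nonneg hs0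
        refine ⟨by simpa using hll, fun t ht => hls t (by simp [ht]), ?_, ?_⟩
        · intro k
          have := hlp (k+1)
          rw [List.take_succ_cons, List.sum_cons] at this
          rw [hcast]
          omega
        · rw [hcast]
          simp only [List.sum_cons] at hl0
          omega
    · rintro ⟨s, hs, r, hr, rfl⟩
      obtain ⟨hse, hsS⟩ := Finset.mem_erase.1 hs
      have hs0 : 0 ≤ s := hnn s hsS hse
      have hcast : (s.toNat : ℤ) = s := Int.toNat_of_nonneg hs0
      obtain ⟨hrl, hrs, hrp, hr0⟩ := (Luk.mem_MF S s.toNat n r).1 hr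
      rw [hcast] at hrp hr0
      rw [Luk.mem_MF]
      refine ⟨by simp [hrl], ?_, ?_, ?_⟩
      · intro t ht
        rcases List.mem_cons.1 ht with rfl | ht
        · exact hsS
        · exact hrs t ht
      · intro k
        cases k with
        | zero => simp
        | succ k =>
          rw [List.take_succ_cons, List.sum_cons]
          have := hrp k
          simp only [Nat.cast_zero, zero_add]
          omega
      · simp only [List.sum_cons, Nat.cast_zero, zero_add]
        omega
  rw [hset, Finset.card_biUnion]
  · exact Finset.sum_congr rfl fun s _ => Finset.card_image_of_injective _ (fun a b h => by
      simpa using h)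
  · intro s hs t ht hst
    rw [Function.onFun, Finset.disjoint_left]
    rintro l hl hl'
    simp only [Finset.mem_image] at hl hl'
    obtain ⟨r, -, rfl⟩ := hl
    obtain ⟨r', -, heq⟩ := hl'
    apply hst
    exact (List.cons.injEq .. ▸ heq).1.symm

noncomputable def Luk.F (S : Finset ℤ) : PowerSeries ℚ :=
  PowerSeries.mk fun n => ((Luk.MF S 0 n).card : ℚ)

lemma Luk.coeff_G (S : Finset ℤ) (hneg : (-1 : ℤ) ∈ S)
    (hnn : ∀ s ∈ S, s ≠ -1 → 0 ≤ s) :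
    ∀ h n : ℕ, PowerSeries.coeff n (X ^ h * (Luk.F S) ^ (h+1))
      = ((Luk.MF S h n).card : ℚ) := by
  intro h
  induction h with
  | zero => intro n; simp [Luk.F, PowerSeries.coeff_mk]
  | succ h ih =>
    intro n
    have hring : X ^ (h+1) * (Luk.F S) ^ (h+2)
        = X * ((Luk.F S) * (X ^ h * (Luk.F S) ^ (h+1))) := by ring
    rw [hring]
    cases n with
    | zero =>
      rw [PowerSeries.coeff_zero_eq_constantCoeff, map_mul, constantCoeff_X, zero_mul,
        Luk.MF_succ_zero]
      simp
    | succ m =>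
      rw [PowerSeries.coeff_succ_X_mul, PowerSeries.coeff_mul,
        Luk.MF_card_succ S hneg hnn h m]
      push_cast
      apply Finset.sum_congr rfl
      intro p _
      rw [ih p.2]
      simp [Luk.F, PowerSeries.coeff_mk]

lemma Luk.W_eq (S : Finset ℤ) (hneg : (-1 : ℤ) ∈ S)
    (hnn : ∀ s ∈ S, s ≠ -1 → 0 ≤ s) :
    X * Luk.F S = X * ∑ s ∈ S, (X * Luk.F S) ^ ((s + 1).toNat) := by
  have hsum : ∑ s ∈ S, (X * Luk.F S) ^ ((s + 1).toNat)
      = 1 + ∑ s ∈ S.erase (-1), X * (X ^ s.toNat * (Luk.F S) ^ (s.toNat + 1)) := by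
    rw [← Finset.insert_erase hneg, Finset.sum_insert (Finset.notMem_erase _ _)]
    norm_num
    apply Finset.sum_congr rfl
    intro s hs
    obtain ⟨hse, hsS⟩ := Finset.mem_erase.1 hs
    have hs0 : 0 ≤ s := hnn s hsS hse
    have ht : (s + 1).toNat = s.toNat + 1 := by omega
    rw [ht]
    ring
  rw [hsum]
  ext n
  cases n with
  | zero =>
    simp only [PowerSeries.coeff_zero_eq_constantCoeff, map_mul, constantCoeff_X, zero_mul]
  | succ m =>
    rw [PowerSeries.coeff_succ_X_mul, PowerSeries.coeff_succ_X_mul, map_add, map_sum]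
    cases m with
    | zero =>
      have h1 : PowerSeries.coeff 0 (Luk.F S) = 1 := by
        simp [Luk.F, PowerSeries.coeff_mk, Luk.MF_zero_zero]
      rw [h1]
      have h2 : ∀ s ∈ S.erase (-1),
          PowerSeries.coeff 0 (X * (X ^ s.toNat * (Luk.F S) ^ (s.toNat + 1))) = 0 := by
        intro s _
        rw [PowerSeries.coeff_zero_eq_constantCoeff, map_mul, constantCoeff_X, zero_mul]
      rw [Finset.sum_congr rfl h2]
      simp
    | succ k =>
      have h2 : ∀ s ∈ S.erase (-1),
          PowerSeries.coeff (k+1) (X * (X ^ s.toNat * (Luk.F S) ^ (s.toNat + 1)))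
            = ((Luk.MF S s.toNat k).card : ℚ) := by
        intro s hs
        rw [PowerSeries.coeff_succ_X_mul, Luk.coeff_G S hneg hnn s.toNat k]
      rw [Finset.sum_congr rfl h2]
      have h3 : PowerSeries.coeff (k+1) (1 : PowerSeries ℚ) = 0 := by
        rw [PowerSeries.coeff_one]; simp
      rw [h3, zero_add]
      rw [show PowerSeries.coeff (k+1) (Luk.F S) = ((Luk.MF S 0 (k+1)).card : ℚ) from by
        simp [Luk.F, PowerSeries.coeff_mk]]
      rw [Luk.MF_card_first_step S hnn k]
      push_cast
      rfl

lemma Luk.pow_coeff_eq {U W : PowerSeries ℚ} (n : ℕ)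
    (hagree : ∀ j ≤ n, PowerSeries.coeff j U = PowerSeries.coeff j W) :
    ∀ k : ℕ, ∀ j ≤ n, PowerSeries.coeff j (U ^ k) = PowerSeries.coeff j (W ^ k) := by
  intro k
  induction k with
  | zero => intro j _; rfl
  | succ k ih =>
    intro j hj
    rw [pow_succ, pow_succ, PowerSeries.coeff_mul, PowerSeries.coeff_mul]
    apply Finset.sum_congr rfl
    intro p hp
    rw [Finset.HasAntidiagonal.mem_antidiagonal] at hp
    rw [ih p.1 (by omega), hagree p.2 (by omega)]

lemma Luk.unique (S : Finset ℤ) (U W : PowerSeries ℚ)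
    (hU0 : PowerSeries.constantCoeff U = 0) (hW0 : PowerSeries.constantCoeff W = 0)
    (hU : U = X * ∑ s ∈ S, U ^ ((s + 1).toNat))
    (hW : W = X * ∑ s ∈ S, W ^ ((s + 1).toNat)) : U = W := by
  have key : ∀ n : ℕ, ∀ j ≤ n, PowerSeries.coeff j U = PowerSeries.coeff j W := by
    intro n
    induction n with
    | zero =>
      intro j hj
      have : j = 0 := Nat.le_zero.1 hj
      subst this
      simp only [PowerSeries.coeff_zero_eq_constantCoeff, hU0, hW0]
    | succ n ih =>
      intro j hj
      by_cases hj' : j ≤ n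
      · exact ih j hj'
      · have hj'' : j = n + 1 := by omega
        subst hj''
        conv_lhs => rw [hU]
        conv_rhs => rw [hW]
        rw [PowerSeries.coeff_succ_X_mul, PowerSeries.coeff_succ_X_mul, map_sum, map_sum]
        apply Finset.sum_congr rfl
        intro s _
        exact Luk.pow_coeff_eq n ih _ n le_rfl
  exact PowerSeries.ext fun n => key n n le_rfl

/-- Let `V` be the formal power series over `ℚ` with zero constant
term satisfying `V = z·∑_{s∈S} V^{s+1}` (equivalently `V = z·V·S(V)`) for a Łukasiewicz
step set `S`. Then the coefficient `[z^n](V/z) = [z^{n+1}]V` equals the number of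
Łukasiewicz excursions of length `n` with step set `S`. -/
theorem lukasiewicz_tree_gf_counts_excursions
    (S : Finset ℤ) (hneg : (-1 : ℤ) ∈ S)
    (hnn : ∀ s ∈ S, s ≠ -1 → 0 ≤ s)
    (V : PowerSeries ℚ)
    (hV0 : PowerSeries.constantCoeff V = 0)
    (hV : V = PowerSeries.X * ∑ s ∈ S, V ^ (s + 1).toNat) :
    ∀ n : ℕ,
      PowerSeries.coeff (n + 1) V =
        (({l : List ℤ | l.length = n ∧ (∀ s ∈ l, s ∈ S) ∧
            (∀ k : ℕ, 0 ≤ (l.take k).sum) ∧ l.sum = 0}).ncard : ℚ) := by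
  intro n
  have hW0 : PowerSeries.constantCoeff (X * Luk.F S) = 0 := by
    rw [map_mul, constantCoeff_X, zero_mul]
  have hVW : V = X * Luk.F S :=
    Luk.unique S V (X * Luk.F S) hV0 hW0 hV (Luk.W_eq S hneg hnn)
  rw [hVW, PowerSeries.coeff_succ_X_mul]
  have hset : {l : List ℤ | l.length = n ∧ (∀ s ∈ l, s ∈ S) ∧
      (∀ k : ℕ, 0 ≤ (l.take k).sum) ∧ l.sum = 0} = ↑(Luk.MF S 0 n) := by
    ext l
    simp [Luk.mem_MF]
  rw [hset, Set.ncard_coe_finset]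
  simp [Luk.F, PowerSeries.coeff_mk]
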